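/- Let 0 < γ < 1. There exists a constant C depending only on γ such that for every τ > 0, every integer n ≥ 0, and every twice continuously differentiable function u : [0, t_{n+1}] → ℝ with |u''(s)| ≤ H for all s (where t_k = kτ), the L1 approximation of the Caputo derivative satisfies | (1/Γ(1-γ)) ∫_0^{t_{n+1}} u'(s) (t_{n+1} - s)^{-γ} ds − (1/(τ^γ Γ(2-γ))) ∑_{l=0}^{n} w_l (u(t_{n-l+1}) − u(t_{n-l})) | ≤ C H τ^{2-γ}. -/

import Mathlib

open Set MeasureTheory Filter

/-- L1 discretization weights `w_l = (l+1)^{1-γ} - l^{1-γ}`. -/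
noncomputable def w (γ : ℝ) (l : ℕ) : ℝ := ((l : ℝ) + 1) ^ (1 - γ) - (l : ℝ) ^ (1 - γ)

/-- Truncation error of the L1 approximation of the Caputo fractional derivative:
there is a constant `C = C(γ)` such that for every step `τ > 0`, every `n` and every
twice continuously differentiable `u` on `[0, t_{n+1}]` with `|u''| ≤ H` there,
`|(1/Γ(1-γ)) ∫_0^{t_{n+1}} u'(s)(t_{n+1}-s)^{-γ} ds
  − (1/(τ^γ Γ(2-γ))) ∑_{l=0}^{n} w_l (u(t_{n-l+1}) − u(t_{n-l}))| ≤ C H τ^{2-γ}`. -/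
theorem caputo_L1_truncation_error (γ : ℝ) (hγ0 : 0 < γ) (hγ1 : γ < 1) :
    ∃ C : ℝ, 0 < C ∧ ∀ (τ : ℝ), 0 < τ → ∀ (n : ℕ) (u : ℝ → ℝ) (H : ℝ),
      ContDiffOn ℝ 2 u (Set.Icc 0 (((n : ℝ) + 1) * τ)) →
      (∀ s ∈ Set.Icc (0 : ℝ) (((n : ℝ) + 1) * τ), |deriv (deriv u) s| ≤ H) →
      |(1 / Real.Gamma (1 - γ)) *
          (∫ s in (0 : ℝ)..(((n : ℝ) + 1) * τ),
            deriv u s * ((((n : ℝ) + 1) * τ - s) ^ (-γ))) -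
        (1 / (τ ^ γ * Real.Gamma (2 - γ))) *
          ∑ l ∈ Finset.range (n + 1),
            w γ l * (u (((n : ℝ) - (l : ℝ) + 1) * τ) - u (((n : ℝ) - (l : ℝ)) * τ))|
        ≤ C * H * τ ^ (2 - γ) := by
  have hg1 : (0:ℝ) < 1 - γ := by linarith
  have hΓpos : 0 < Real.Gamma (1 - γ) := Real.Gamma_pos_of_pos hg1
  refine ⟨(1 + 1/(1-γ)) / Real.Gamma (1-γ), by positivity, ?_⟩
  intro τ hτ n u H hu hH
  set T : ℝ := ((n:ℝ)+1)*τ with hTdef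
  have hT0 : 0 < T := by positivity
  set t : ℕ → ℝ := fun k => (k:ℝ) * τ with htdef
  have ht0 : t 0 = 0 := by simp [htdef]
  have htn : t (n+1) = T := by simp only [htdef, hTdef]; push_cast; ring
  have htnonneg : ∀ k, 0 ≤ t k := fun k => by
    simp only [htdef]; positivity
  have htmono : ∀ k, t k ≤ t (k+1) := by
    intro k
    simp only [htdef]
    have : (k:ℝ) ≤ ((k:ℕ)+1 : ℕ) := by push_cast; linarith
    exact mul_le_mul_of_nonneg_right this hτ.le
  have hlen : ∀ k, t (k+1) - t k = τ := by
    intro k; simp only [htdef]; push_cast; ring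
  have htle : ∀ k, k ≤ n+1 → t k ≤ T := by
    intro k hk
    simp only [htdef, hTdef]
    have : (k:ℝ) ≤ (n:ℝ)+1 := by exact_mod_cast hk
    exact mul_le_mul_of_nonneg_right this hτ.le
  have htmem : ∀ k, k ≤ n+1 → t k ∈ Set.Icc (0:ℝ) T := fun k hk => ⟨htnonneg k, htle k hk⟩
  have hsubIcc : ∀ k, k ≤ n → Set.Icc (t k) (t (k+1)) ⊆ Set.Icc (0:ℝ) T := by
    intro k hk x hx
    exact ⟨le_trans (htnonneg k) hx.1, le_trans hx.2 (htle (k+1) (by omega))⟩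
  have hsubuIcc : ∀ k, k ≤ n → Set.uIcc (t k) (t (k+1)) ⊆ Set.Icc (0:ℝ) T := by
    intro k hk
    rw [Set.uIcc_of_le (htmono k)]
    exact hsubIcc k hk
  -- the within-derivative g and its properties
  set g : ℝ → ℝ := derivWithin u (Set.Icc 0 T) with hgdef
  have huniq : UniqueDiffOn ℝ (Set.Icc (0:ℝ) T) := uniqueDiffOn_Icc hT0
  have hgC1 : ContDiffOn ℝ 1 g (Set.Icc 0 T) := hu.derivWithin huniq (by norm_num)
  have hgcont : ContinuousOn g (Set.Icc 0 T) := hgC1.continuousOn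
  have hgdiff : DifferentiableOn ℝ g (Set.Icc 0 T) := hgC1.differentiableOn (by norm_num)
  have hudiff : DifferentiableOn ℝ u (Set.Icc 0 T) := hu.differentiableOn (by norm_num)
  have hIccnhds : ∀ x ∈ Set.Ioo (0:ℝ) T, Set.Icc (0:ℝ) T ∈ nhds x := fun x hx =>
    Icc_mem_nhds hx.1 hx.2
  have hgeq : ∀ x ∈ Set.Ioo (0:ℝ) T, g x = deriv u x := fun x hx =>
    derivWithin_of_mem_nhds (hIccnhds x hx)
  have huderiv : ∀ x ∈ Set.Ioo (0:ℝ) T, HasDerivAt u (g x) x := by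
    intro x hx
    have h1 : DifferentiableAt ℝ u x :=
      (hudiff x (Set.Ioo_subset_Icc_self hx)).differentiableAt (hIccnhds x hx)
    rw [hgeq x hx]
    exact h1.hasDerivAt
  have hd2cont : ContinuousOn (derivWithin g (Set.Icc 0 T)) (Set.Icc 0 T) := by
    have h0 : ContDiffOn ℝ 0 (derivWithin g (Set.Icc 0 T)) (Set.Icc 0 T) :=
      hgC1.derivWithin huniq (by norm_num)
    exact h0.continuousOn
  have hd2eq : ∀ x ∈ Set.Ioo (0:ℝ) T, derivWithin g (Set.Icc 0 T) x = deriv (deriv u) x := by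
    intro x hx
    rw [derivWithin_of_mem_nhds (hIccnhds x hx)]
    apply Filter.EventuallyEq.deriv_eq
    filter_upwards [isOpen_Ioo.mem_nhds hx] with y hy
    exact hgeq y hy
  have hd2bound : ∀ x ∈ Set.Icc (0:ℝ) T, |derivWithin g (Set.Icc 0 T) x| ≤ H := by
    intro x hx
    have hxcl : x ∈ closure (Set.Ioo (0:ℝ) T) := by
      rwa [closure_Ioo hT0.ne]
    haveI hne : (nhdsWithin x (Set.Ioo (0:ℝ) T)).NeBot :=
      mem_closure_iff_nhdsWithin_neBot.1 hxcl
    have hcwa : ContinuousWithinAt (fun y => |derivWithin g (Set.Icc 0 T) y|)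
        (Set.Ioo (0:ℝ) T) x := ((hd2cont x hx).mono Set.Ioo_subset_Icc_self).abs
    refine le_of_tendsto hcwa ?_
    filter_upwards [self_mem_nhdsWithin] with y hy
    rw [hd2eq y hy]
    exact hH y (Set.Ioo_subset_Icc_self hy)
  have hH0 : 0 ≤ H := le_trans (abs_nonneg _) (hH 0 ⟨le_refl 0, hT0.le⟩)
  have hLip : ∀ x ∈ Set.Icc (0:ℝ) T, ∀ y ∈ Set.Icc (0:ℝ) T, |g y - g x| ≤ H * |y - x| := by
    intro x hx y hy
    have := Convex.norm_image_sub_le_of_norm_derivWithin_le hgdiff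
      (fun z hz => by rw [Real.norm_eq_abs]; exact hd2bound z hz) (convex_Icc _ _) hx hy
    simpa [Real.norm_eq_abs] using this
  -- the kernel p and its integrals
  set p : ℝ → ℝ := fun s => (T - s) ^ (-γ) with hpdef
  have hpnonneg : ∀ s, s ≤ T → 0 ≤ p s := fun s hs =>
    Real.rpow_nonneg (by linarith) _
  have hpint : ∀ a b : ℝ, IntervalIntegrable p volume a b := by
    intro a b
    have h1 : IntervalIntegrable (fun x : ℝ => x ^ (-γ)) volume (T - a) (T - b) :=
      intervalIntegral.intervalIntegrable_rpow' (by linarith)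
    have h2 := h1.comp_sub_left T
    simpa using h2
  have hIval : ∀ a b : ℝ, (∫ s in a..b, p s) =
      ((T-a)^(1-γ) - (T-b)^(1-γ))/(1-γ) := by
    intro a b
    have h1 : (∫ s in a..b, p s) = ∫ x in T-b..T-a, x ^ (-γ) :=
      intervalIntegral.integral_comp_sub_left (fun x => x ^ (-γ)) T
    rw [h1, integral_rpow (Or.inl (by linarith : (-1:ℝ) < -γ)),
      show -γ + 1 = 1 - γ from by ring]
  have hpmono : ∀ a b : ℝ, 0 < T - b → a ≤ b → p a ≤ p b := by
    intro a b hb hab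
    exact Real.rpow_le_rpow_of_nonpos hb (by linarith) (by linarith)
  -- integrability pieces
  have hgint : ∀ k, k ≤ n → IntervalIntegrable g volume (t k) (t (k+1)) :=
    fun k hk => (hgcont.mono (hsubuIcc k hk)).intervalIntegrable
  have hgpint : ∀ k, k ≤ n →
      IntervalIntegrable (fun s => g s * p s) volume (t k) (t (k+1)) :=
    fun k hk => (hpint _ _).continuousOn_mul (hgcont.mono (hsubuIcc k hk))
  -- FTC on each subinterval
  set D : ℕ → ℝ := fun k => u (t (k+1)) - u (t k) with hDdef
  have hFTC : ∀ k, k ≤ n → D k = ∫ s in t k..t (k+1), g s := by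
    intro k hk
    have hIooSub : Set.Ioo (t k) (t (k+1)) ⊆ Set.Ioo (0:ℝ) T := by
      intro x hx
      exact ⟨lt_of_le_of_lt (htnonneg k) hx.1, lt_of_lt_of_le hx.2 (htle (k+1) (by omega))⟩
    have := intervalIntegral.integral_eq_sub_of_hasDeriv_right_of_le (htmono k)
      (hu.continuousOn.mono (hsubIcc k hk))
      (fun x hx => ((huderiv x (hIooSub hx)).hasDerivWithinAt))
      (hgint k hk)
    rw [this]
  -- the slope bound
  have hslope : ∀ k, k ≤ n → ∀ s ∈ Set.Icc (t k) (t (k+1)), |g s - D k / τ| ≤ H * τ := by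
    intro k hk s hs
    have hsT : s ∈ Set.Icc (0:ℝ) T := hsubIcc k hk hs
    have key : |∫ σ in t k..t (k+1), (g s - g σ)| ≤ (H * τ) * |t (k+1) - t k| := by
      have := intervalIntegral.norm_integral_le_of_norm_le_const
        (f := fun σ => g s - g σ) (a := t k) (b := t (k+1)) (C := H * τ) ?_
      · simpa [Real.norm_eq_abs] using this
      · intro σ hσ
        rw [Set.uIoc_of_le (htmono k)] at hσ
        have hσ' : σ ∈ Set.Icc (t k) (t (k+1)) := ⟨hσ.1.le, hσ.2⟩
        have hσT : σ ∈ Set.Icc (0:ℝ) T := hsubIcc k hk hσ'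
        have h1 : |g s - g σ| ≤ H * |s - σ| := hLip σ hσT s hsT
        have h2 : |s - σ| ≤ τ := by
          rw [abs_le]
          have := hlen k
          constructor <;> [linarith [hs.1, hσ'.2]; linarith [hs.2, hσ'.1]]
        calc ‖g s - g σ‖ = |g s - g σ| := Real.norm_eq_abs _
          _ ≤ H * |s - σ| := h1
          _ ≤ H * τ := mul_le_mul_of_nonneg_left h2 hH0
    have e1 : (∫ σ in t k..t (k+1), (g s - g σ)) = τ * g s - D k := by
      rw [intervalIntegral.integral_sub intervalIntegrable_const (hgint k hk),
        intervalIntegral.integral_const, ← hFTC k hk, hlen k, smul_eq_mul]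
    have e2 : g s - D k / τ = (∫ σ in t k..t (k+1), (g s - g σ)) / τ := by
      rw [e1]; field_simp
    rw [e2, abs_div, abs_of_pos hτ, div_le_iff₀ hτ]
    calc |∫ σ in t k..t (k+1), (g s - g σ)| ≤ (H * τ) * |t (k+1) - t k| := key
      _ = H * τ * τ := by rw [hlen k, abs_of_pos hτ]
  -- the per-interval error terms
  set E : ℕ → ℝ := fun k => (∫ s in t k..t (k+1), g s * p s)
      - (D k / τ) * ∫ s in t k..t (k+1), p s with hEdef
  -- bound for k < n
  have hEbound : ∀ k, k < n → |E k| ≤ H * τ * τ * (p (t (k+1)) - p (t k)) := by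
    intro k hk
    have hTk1 : 0 < T - t (k+1) := by
      have h1 : t (k+1) < t (n+1) := by
        simp only [htdef]
        have : ((k:ℝ)+1) < (n:ℝ)+1 := by
          have : (k:ℝ) < (n:ℝ) := by exact_mod_cast hk
          linarith
        push_cast
        exact mul_lt_mul_of_pos_right this hτ
      rw [htn] at h1
      linarith
    have hexp : E k = ∫ s in t k..t (k+1), (g s - D k / τ) * (p s - p (t k)) := by
      have hrw : ∀ s : ℝ, (g s - D k/τ) * (p s - p (t k)) =
          (g s * p s - (D k / τ) * p s) - p (t k) * (g s - D k / τ) := by intro s; ring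
      simp only [hrw]
      rw [intervalIntegral.integral_sub
          ((hgpint k hk.le).sub (((hpint _ _)).const_mul _))
          (((hgint k hk.le).sub intervalIntegrable_const).const_mul _),
        intervalIntegral.integral_sub (hgpint k hk.le) ((hpint _ _).const_mul _),
        intervalIntegral.integral_const_mul, intervalIntegral.integral_const_mul,
        intervalIntegral.integral_sub (hgint k hk.le) intervalIntegrable_const,
        ← hFTC k hk.le, intervalIntegral.integral_const, hlen k, smul_eq_mul, hEdef]
      field_simp
      ring
    rw [hexp]
    have hbnd := intervalIntegral.norm_integral_le_of_norm_le_const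
      (f := fun s => (g s - D k / τ) * (p s - p (t k))) (a := t k) (b := t (k+1))
      (C := (H * τ) * (p (t (k+1)) - p (t k))) ?_
    · rw [Real.norm_eq_abs] at hbnd
      calc |∫ s in t k..t (k+1), (g s - D k / τ) * (p s - p (t k))|
          ≤ (H * τ) * (p (t (k+1)) - p (t k)) * |t (k+1) - t k| := hbnd
        _ = H * τ * τ * (p (t (k+1)) - p (t k)) := by rw [hlen k, abs_of_pos hτ]; ring
    · intro s hs
      rw [Set.uIoc_of_le (htmono k)] at hs
      have hs' : s ∈ Set.Icc (t k) (t (k+1)) := ⟨hs.1.le, hs.2⟩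
      have h1 : |g s - D k / τ| ≤ H * τ := hslope k hk.le s hs'
      have hps1 : p (t k) ≤ p s := hpmono (t k) s (by linarith [hs'.2]) hs'.1
      have hps2 : p s ≤ p (t (k+1)) := hpmono s (t (k+1)) hTk1 hs'.2
      have h2 : |p s - p (t k)| ≤ p (t (k+1)) - p (t k) := by
        rw [abs_le]; constructor <;> linarith
      rw [Real.norm_eq_abs, abs_mul]
      exact mul_le_mul h1 h2 (abs_nonneg _) (by positivity)
  -- bound for k = n
  have hEnbound : |E n| ≤ H * τ * (τ^(1-γ)/(1-γ)) := by
    have hexp : E n = ∫ s in t n..t (n+1), (g s - D n / τ) * p s := by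
      have hrw : ∀ s : ℝ, (g s - D n/τ) * p s = g s * p s - (D n / τ) * p s := by
        intro s; ring
      simp only [hrw]
      rw [intervalIntegral.integral_sub (hgpint n le_rfl) ((hpint _ _).const_mul _),
        intervalIntegral.integral_const_mul, hEdef]
    rw [hexp]
    have key := intervalIntegral.norm_integral_le_of_norm_le
      (f := fun s => (g s - D n / τ) * p s) (a := t n) (b := t (n+1))
      (g := fun s => (H * τ) * p s) (μ := volume) (htmono n) ?_ (((hpint _ _)).const_mul _)
    · rw [Real.norm_eq_abs, intervalIntegral.integral_const_mul, hIval] at key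
      have hTtn : T - t n = τ := by
        have := hlen n; rw [htn] at this; linarith
      have hTtn1 : T - t (n+1) = 0 := by rw [htn]; ring
      rw [hTtn, hTtn1, Real.zero_rpow (by linarith : (1:ℝ) - γ ≠ 0), sub_zero] at key
      calc |∫ s in t n..t (n+1), (g s - D n / τ) * p s|
          ≤ |H * τ * (τ ^ (1-γ) / (1-γ))| := key.trans (le_abs_self _)
        _ = H * τ * (τ^(1-γ)/(1-γ)) := by
            rw [abs_of_nonneg]
            have : (0:ℝ) ≤ τ ^ (1-γ) := Real.rpow_nonneg hτ.le _
            positivity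
    · refine Filter.Eventually.of_forall ?_
      intro s hs
      have hs' : s ∈ Set.Icc (t n) (t (n+1)) := ⟨hs.1.le, hs.2⟩
      have hsT : s ∈ Set.Icc (0:ℝ) T := hsubIcc n le_rfl hs'
      rw [Real.norm_eq_abs, abs_mul, abs_of_nonneg (hpnonneg s hsT.2)]
      exact mul_le_mul_of_nonneg_right (hslope n le_rfl s hs') (hpnonneg s hsT.2)
  -- rewrite the main integral using g
  have hcongr : (∫ s in (0:ℝ)..T, deriv u s * ((T - s) ^ (-γ)))
      = ∫ s in (0:ℝ)..T, g s * p s := by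
    apply intervalIntegral.integral_congr_ae
    have hne : ∀ᵐ x : ℝ, x ≠ T := by
      rw [ae_iff]
      simp only [not_not, Set.setOf_eq_eq_singleton]
      exact measure_singleton T
    filter_upwards [hne] with x hx hxm
    rw [Set.uIoc_of_le hT0.le] at hxm
    have hxoo : x ∈ Set.Ioo (0:ℝ) T := ⟨hxm.1, lt_of_le_of_ne hxm.2 hx⟩
    rw [hgeq x hxoo]
  have hsplit : (∫ s in (0:ℝ)..T, g s * p s)
      = ∑ k ∈ Finset.range (n+1), ∫ s in t k..t (k+1), g s * p s := by
    have h := intervalIntegral.sum_integral_adjacent_intervals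
      (f := fun s => g s * p s) (μ := volume) (a := t) (n := n+1)
      (fun k hk => hgpint k (by omega))
    rw [ht0, htn] at h
    exact h.symm
  have hΓ2 : Real.Gamma (2-γ) = (1-γ) * Real.Gamma (1-γ) := by
    have h := Real.Gamma_add_one (by linarith : (1:ℝ) - γ ≠ 0)
    rw [show (1:ℝ)-γ+1 = 2-γ from by ring] at h
    exact h
  have hτγpos : 0 < τ ^ γ := Real.rpow_pos_of_pos hτ _
  have hτpow : τ ^ (1-γ) * τ ^ γ = τ := by
    rw [← Real.rpow_add hτ, show (1:ℝ)-γ+γ = 1 from by ring, Real.rpow_one]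
  have hscal : ∀ a b Δ : ℝ, 1/(τ^γ * Real.Gamma (2-γ)) * ((a - b) * Δ)
      = 1/Real.Gamma (1-γ) * (Δ/τ * ((a * τ^(1-γ) - b * τ^(1-γ))/(1-γ))) := by
    intro a b Δ
    have hP : (0:ℝ) < τ^(1-γ) := Real.rpow_pos_of_pos hτ _
    rw [hΓ2]
    generalize hql : τ^γ = Q at hτγpos hτpow ⊢
    generalize hpl : τ^((1:ℝ)-γ) = P at hP hτpow ⊢
    rw [← hτpow]
    field_simp
  have hsum2 : (1 / (τ^γ * Real.Gamma (2-γ))) *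
      ∑ l ∈ Finset.range (n+1), w γ l * (u (((n:ℝ) - (l:ℝ) + 1)*τ) - u (((n:ℝ) - (l:ℝ))*τ))
      = (1/Real.Gamma (1-γ)) *
        ∑ k ∈ Finset.range (n+1), (D k/τ) * ∫ s in t k..t (k+1), p s := by
    rw [Finset.mul_sum, Finset.mul_sum, ← Finset.sum_range_reflect]
    apply Finset.sum_congr rfl
    intro j hj
    have hjn : j ≤ n := by
      have := Finset.mem_range.1 hj; omega
    have hidx : n + 1 - 1 - j = n - j := by omega
    have hcast : ((n + 1 - 1 - j : ℕ) : ℝ) = (n:ℝ) - j := by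
      rw [hidx, Nat.cast_sub hjn]
    have harg1 : ((n:ℝ) - ((n + 1 - 1 - j : ℕ):ℝ) + 1) * τ = t (j+1) := by
      rw [hcast]; simp only [htdef]; push_cast; ring
    have harg2 : ((n:ℝ) - ((n + 1 - 1 - j : ℕ):ℝ)) * τ = t j := by
      rw [hcast]; simp only [htdef]; push_cast; ring
    rw [harg1, harg2, hIval]
    have hv1 : T - t j = ((n:ℝ) - j + 1) * τ := by
      simp only [htdef, hTdef]; ring
    have hv2 : T - t (j+1) = ((n:ℝ) - j) * τ := by
      simp only [htdef, hTdef]; push_cast; ring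
    rw [hv1, hv2]
    have hnj0 : (0:ℝ) ≤ (n:ℝ) - j := by
      have : (j:ℝ) ≤ n := by exact_mod_cast hjn
      linarith
    rw [Real.mul_rpow (by linarith) hτ.le, Real.mul_rpow hnj0 hτ.le]
    have hw : w γ (n + 1 - 1 - j) = ((n:ℝ) - j + 1)^(1-γ) - ((n:ℝ) - j)^(1-γ) := by
      rw [w, hcast]
    rw [hw]
    simp only [hDdef]
    exact hscal _ _ _
  have hmain : (1 / Real.Gamma (1-γ)) * (∫ s in (0:ℝ)..T, deriv u s * ((T - s) ^ (-γ)))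
      - (1 / (τ^γ * Real.Gamma (2-γ))) * ∑ l ∈ Finset.range (n+1),
          w γ l * (u (((n:ℝ) - (l:ℝ) + 1)*τ) - u (((n:ℝ) - (l:ℝ))*τ))
      = (1/Real.Gamma (1-γ)) * ∑ k ∈ Finset.range (n+1), E k := by
    rw [hcongr, hsplit, hsum2, ← mul_sub, ← Finset.sum_sub_distrib]
  rw [hmain, abs_mul, abs_of_pos (by positivity : (0:ℝ) < 1/Real.Gamma (1-γ))]
  have hTtn : T - t n = τ := by
    have := hlen n; rw [htn] at this; linarith
  have hptn : p (t n) = τ^(-γ) := by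
    simp only [hpdef]; rw [hTtn]
  have hττ : τ * τ * τ^(-γ) = τ^((2:ℝ)-γ) := by
    rw [show (2:ℝ)-γ = 1 + 1 + -γ from by ring, Real.rpow_add hτ, Real.rpow_add hτ,
      Real.rpow_one]
  have hττ2 : τ * τ^((1:ℝ)-γ) = τ^((2:ℝ)-γ) := by
    rw [show (2:ℝ)-γ = 1 + (1-γ) from by ring, Real.rpow_add hτ, Real.rpow_one]
  have hsumbound : |∑ k ∈ Finset.range (n+1), E k|
      ≤ H * τ^((2:ℝ)-γ) + H * τ^((2:ℝ)-γ)/(1-γ) := by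
    rw [Finset.sum_range_succ]
    refine le_trans (abs_add_le _ _) ?_
    have hA : |∑ k ∈ Finset.range n, E k| ≤ H * τ^((2:ℝ)-γ) := by
      refine le_trans (Finset.abs_sum_le_sum_abs _ _) ?_
      refine le_trans (Finset.sum_le_sum (fun k hk => hEbound k (Finset.mem_range.1 hk))) ?_
      rw [← Finset.mul_sum, Finset.sum_range_sub (fun k => p (t k))]
      have h0 : 0 ≤ p (t 0) := hpnonneg _ (htle 0 (by omega))
      calc H * τ * τ * (p (t n) - p (t 0)) ≤ H * τ * τ * p (t n) := by
            apply mul_le_mul_of_nonneg_left (by linarith) (by positivity)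
        _ = H * (τ * τ * τ^(-γ)) := by rw [hptn]; ring
        _ = H * τ^((2:ℝ)-γ) := by rw [hττ]
    have hB : |E n| ≤ H * τ^((2:ℝ)-γ)/(1-γ) := by
      refine le_trans hEnbound (le_of_eq ?_)
      rw [← hττ2]; field_simp
    linarith
  calc (1/Real.Gamma (1-γ)) * |∑ k ∈ Finset.range (n+1), E k|
      ≤ (1/Real.Gamma (1-γ)) * (H * τ^((2:ℝ)-γ) + H * τ^((2:ℝ)-γ)/(1-γ)) :=
        mul_le_mul_of_nonneg_left hsumbound (by positivity)
    _ = (1 + 1/(1-γ))/Real.Gamma (1-γ) * H * τ^((2:ℝ)-γ) := by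
        field_simp
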